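/- (Lemma 2.2, covariance form.) Under Assumption 2.1, let (t,a) and (τ,b) be two distinct indices, let P be the orthogonal projection onto the closed linear span of {x_{(s,c)} : (s,c) ∉ {(t,a),(τ,b)}}, and set r₁ = x_{(t,a)} − P x_{(t,a)} and r₂ = x_{(τ,b)} − P x_{(τ,b)}. Then the 2×2 Gram matrix [[⟨r₁,r₁⟩, ⟨r₁,r₂⟩],[⟨r₂,r₁⟩, ⟨r₂,r₂⟩]] equals the matrix inverse of [[[D]_{(t,a),(t,a)}, [D]_{(t,a),(τ,b)}],[[D]_{(τ,b),(t,a)}, [D]_{(τ,b),(τ,b)}]]. -/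

import Mathlib

open scoped InnerProductSpace

noncomputable section

abbrev Ell2p (p : ℕ) : Type := lp (fun _ : ℤ × Fin p => ℝ) 2

noncomputable def e2p (p : ℕ) (i : ℤ × Fin p) : Ell2p p := lp.single 2 i 1

abbrev Ell2Z : Type := lp (fun _ : ℤ => ℝ) 2

noncomputable def eZ (t : ℤ) : Ell2Z := lp.single 2 t 1

def gramQuadSet {H : Type*} [NormedAddCommGroup H] [InnerProductSpace ℝ H]
    {p : ℕ} (x : ℤ × Fin p → H) : Set ℝ :=
  {r : ℝ | ∃ v : (ℤ × Fin p) →₀ ℝ,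
      (∑ i ∈ v.support, (v i) ^ 2) = 1 ∧ ‖∑ i ∈ v.support, v i • x i‖ ^ 2 = r}

def IsResidual {H : Type*} [NormedAddCommGroup H] [InnerProductSpace ℝ H]
    (S : Set H) (y r : H) : Prop :=
  (y - r) ∈ (Submodule.span ℝ S).topologicalClosure ∧ ∀ z ∈ S, ⟪r, z⟫_ℝ = 0

namespace Statement3Aux

variable {H : Type*} [NormedAddCommGroup H] [InnerProductSpace ℝ H]

/-- Orthogonality to a set extends to the closure of its span. -/
lemma ortho_closure {S : Set H} {r : H} (h : ∀ z ∈ S, ⟪r, z⟫_ℝ = 0) :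
    ∀ y ∈ (Submodule.span ℝ S).topologicalClosure, ⟪r, y⟫_ℝ = 0 := by
  have hle : Submodule.span ℝ S ≤ LinearMap.ker (innerSL ℝ r : H →ₗ[ℝ] ℝ) := by
    rw [Submodule.span_le]
    intro z hz
    simpa using h z hz
  have hcl : (Submodule.span ℝ S).topologicalClosure ≤ LinearMap.ker (innerSL ℝ r : H →ₗ[ℝ] ℝ) :=
    Submodule.topologicalClosure_minimal _ hle (ContinuousLinearMap.isClosed_ker (innerSL ℝ r))
  intro y hy
  simpa using hcl hy

lemma inner_e {p : ℕ} (f : Ell2p p) (k : ℤ × Fin p) : ⟪f, e2p p k⟫_ℝ = f k := by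
  rw [e2p, lp.inner_single_right]
  simp [RCLike.inner_apply]

lemma inner_ee {p : ℕ} (l k : ℤ × Fin p) :
    ⟪e2p p l, e2p p k⟫_ℝ = if k = l then 1 else 0 := by
  rw [inner_e]
  by_cases h : k = l
  · subst h
    rw [e2p, lp.single_apply_self, if_pos rfl]
  · rw [e2p, lp.single_apply_ne _ _ _ h, if_neg h]

lemma inner_iota {p : ℕ} (v : (ℤ × Fin p) →₀ ℝ) (k : ℤ × Fin p) :
    ⟪Finsupp.linearCombination ℝ (e2p p) v, e2p p k⟫_ℝ = v k := by
  rw [Finsupp.linearCombination_apply, Finsupp.sum, sum_inner]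
  have : ∀ l ∈ v.support, ⟪(v l) • e2p p l, e2p p k⟫_ℝ = if k = l then v l else 0 := by
    intro l _
    rw [real_inner_smul_left, inner_ee]
    by_cases h : k = l <;> simp [h]
  rw [Finset.sum_congr rfl this, Finset.sum_ite_eq]
  by_cases h : k ∈ v.support
  · rw [if_pos h]
  · rw [if_neg h]
    exact (Finsupp.notMem_support_iff.mp h).symm

lemma coord_C {p : ℕ} (x : ℤ × Fin p → H) (C : Ell2p p →L[ℝ] Ell2p p)
    (hC : ∀ i j : ℤ × Fin p, ⟪C (e2p p j), e2p p i⟫_ℝ = ⟪x i, x j⟫_ℝ)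
    (v : (ℤ × Fin p) →₀ ℝ) (k : ℤ × Fin p) :
    ⟪C (Finsupp.linearCombination ℝ (e2p p) v), e2p p k⟫_ℝ
      = ⟪x k, Finsupp.linearCombination ℝ x v⟫_ℝ := by
  rw [Finsupp.linearCombination_apply, Finsupp.linearCombination_apply,
    Finsupp.sum, Finsupp.sum, map_sum, sum_inner, inner_sum]
  refine Finset.sum_congr rfl fun l _ => ?_
  rw [map_smul, real_inner_smul_left, real_inner_smul_right, hC]

lemma quad_eq {p : ℕ} (x : ℤ × Fin p → H) (C : Ell2p p →L[ℝ] Ell2p p)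
    (hC : ∀ i j : ℤ × Fin p, ⟪C (e2p p j), e2p p i⟫_ℝ = ⟪x i, x j⟫_ℝ)
    (v : (ℤ × Fin p) →₀ ℝ) :
    ⟪C (Finsupp.linearCombination ℝ (e2p p) v),
      Finsupp.linearCombination ℝ (e2p p) v⟫_ℝ
      = ‖Finsupp.linearCombination ℝ x v‖ ^ 2 := by
  nth_rewrite 2 [Finsupp.linearCombination_apply]
  rw [Finsupp.sum, inner_sum]
  have h1 : ∀ l ∈ v.support,
      ⟪C (Finsupp.linearCombination ℝ (e2p p) v), (v l) • e2p p l⟫_ℝ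
        = v l * ⟪x l, Finsupp.linearCombination ℝ x v⟫_ℝ := by
    intro l _
    rw [real_inner_smul_right, coord_C x C hC]
  rw [Finset.sum_congr rfl h1]
  have h2 : ∑ l ∈ v.support, v l * ⟪x l, Finsupp.linearCombination ℝ x v⟫_ℝ
      = ⟪Finsupp.linearCombination ℝ x v, Finsupp.linearCombination ℝ x v⟫_ℝ := by
    nth_rewrite 2 [Finsupp.linearCombination_apply]
    rw [Finsupp.sum, sum_inner]
    exact Finset.sum_congr rfl fun l _ => (real_inner_smul_left _ _ _).symm
  rw [h2, real_inner_self_eq_norm_sq]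

/-- The key construction: for a residual `r` of `x m` (m ∈ {i,j}), produce `u ∈ ℓ²` whose
image under `C` has coordinates `⟪x k, r⟫` and whose `i`,`j` coordinates match `e m`. -/
lemma exists_u {p : ℕ} (x : ℤ × Fin p → H) (lamInf : ℝ) (hpos : 0 < lamInf)
    (C : Ell2p p →L[ℝ] Ell2p p)
    (hC : ∀ i j : ℤ × Fin p, ⟪C (e2p p j), e2p p i⟫_ℝ = ⟪x i, x j⟫_ℝ)
    (hlo : ∀ v : Ell2p p, lamInf * ‖v‖ ^ 2 ≤ ⟪C v, v⟫_ℝ)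
    (i j m : ℤ × Fin p) (r : H)
    (hr : IsResidual (x '' {k : ℤ × Fin p | k ≠ i ∧ k ≠ j}) (x m) r) :
    ∃ u : Ell2p p, (∀ k : ℤ × Fin p, ⟪C u, e2p p k⟫_ℝ = ⟪x k, r⟫_ℝ) ∧
      ⟪u, e2p p i⟫_ℝ = ⟪e2p p m, e2p p i⟫_ℝ ∧
      ⟪u, e2p p j⟫_ℝ = ⟪e2p p m, e2p p j⟫_ℝ := by
  set s : Set (ℤ × Fin p) := {k : ℤ × Fin p | k ≠ i ∧ k ≠ j} with hs
  set y : H := x m - r with hy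
  have hymem : y ∈ closure ((Submodule.span ℝ (x '' s) : Submodule ℝ H) : Set H) := by
    rw [← Submodule.topologicalClosure_coe]
    exact hr.1
  obtain ⟨a, ha_mem, ha_lim⟩ := mem_closure_iff_seq_limit.mp hymem
  have hv : ∀ n : ℕ, ∃ l : (ℤ × Fin p) →₀ ℝ,
      l ∈ Finsupp.supported ℝ ℝ s ∧ Finsupp.linearCombination ℝ x l = a n := by
    intro n
    exact (Finsupp.mem_span_image_iff_linearCombination ℝ).mp (ha_mem n)
  choose v hv_supp hv_eq using hv
  set ι : ((ℤ × Fin p) →₀ ℝ) →ₗ[ℝ] Ell2p p := Finsupp.linearCombination ℝ (e2p p) with hι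
  -- norm comparison
  have hcomp : ∀ w : (ℤ × Fin p) →₀ ℝ,
      ‖ι w‖ ≤ Real.sqrt lamInf⁻¹ * ‖Finsupp.linearCombination ℝ x w‖ := by
    intro w
    have h1 : lamInf * ‖ι w‖ ^ 2 ≤ ‖Finsupp.linearCombination ℝ x w‖ ^ 2 := by
      calc lamInf * ‖ι w‖ ^ 2 ≤ ⟪C (ι w), ι w⟫_ℝ := hlo _
        _ = ‖Finsupp.linearCombination ℝ x w‖ ^ 2 := quad_eq x C hC w
    have h2 : ‖ι w‖ ^ 2 ≤ lamInf⁻¹ * ‖Finsupp.linearCombination ℝ x w‖ ^ 2 := by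
      rw [← le_div_iff₀' hpos] at h1
      rw [inv_mul_eq_div]
      exact h1
    have h3 := Real.sqrt_le_sqrt h2
    rw [Real.sqrt_sq (norm_nonneg _), Real.sqrt_mul (by positivity),
      Real.sqrt_sq (norm_nonneg _)] at h3
    exact h3
  -- the sequence ι (v n) is Cauchy
  have hca : CauchySeq a := ha_lim.cauchySeq
  have hcauchy : CauchySeq (fun n => ι (v n)) := by
    rw [Metric.cauchySeq_iff] at hca ⊢
    intro ε hε
    set c : ℝ := Real.sqrt lamInf⁻¹ with hc
    have hc0 : 0 ≤ c := Real.sqrt_nonneg _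
    obtain ⟨N, hN⟩ := hca (ε / (c + 1)) (by positivity)
    refine ⟨N, fun n hn n' hn' => ?_⟩
    have hd := hN n hn n' hn'
    have hd0 : (0:ℝ) ≤ dist (a n) (a n') := dist_nonneg
    have hd1 : dist (a n) (a n') * (c + 1) < ε := by
      rw [← lt_div_iff₀ (by positivity)]
      exact hd
    calc dist (ι (v n)) (ι (v n')) = ‖ι (v n) - ι (v n')‖ := dist_eq_norm _ _
      _ = ‖ι (v n - v n')‖ := by rw [map_sub]
      _ ≤ c * ‖Finsupp.linearCombination ℝ x (v n - v n')‖ := hcomp _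
      _ = c * ‖a n - a n'‖ := by rw [map_sub, hv_eq, hv_eq]
      _ = c * dist (a n) (a n') := by rw [dist_eq_norm]
      _ < ε := by nlinarith
  obtain ⟨w, hw⟩ := cauchySeq_tendsto_of_complete hcauchy
  refine ⟨e2p p m - w, ?_, ?_, ?_⟩
  · -- coordinates of C u
    intro k
    have hCw : ⟪C w, e2p p k⟫_ℝ = ⟪x k, y⟫_ℝ := by
      have t1 : Filter.Tendsto (fun n => ⟪C (ι (v n)), e2p p k⟫_ℝ)
          Filter.atTop (nhds ⟪C w, e2p p k⟫_ℝ) :=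
        Filter.Tendsto.inner (((C.continuous.tendsto w).comp hw)) tendsto_const_nhds
      have t2 : Filter.Tendsto (fun n => ⟪C (ι (v n)), e2p p k⟫_ℝ)
          Filter.atTop (nhds ⟪x k, y⟫_ℝ) := by
        have : (fun n => ⟪C (ι (v n)), e2p p k⟫_ℝ) = fun n => ⟪x k, a n⟫_ℝ := by
          funext n
          rw [hι, coord_C x C hC, hv_eq]
        rw [this]
        exact Filter.Tendsto.inner tendsto_const_nhds ha_lim
      exact tendsto_nhds_unique t1 t2
    rw [map_sub, inner_sub_left, hC, hCw, ← inner_sub_right, hy, sub_sub_cancel]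
  · -- i-coordinate
    have hwi : ⟪w, e2p p i⟫_ℝ = 0 := by
      have t1 : Filter.Tendsto (fun n => ⟪ι (v n), e2p p i⟫_ℝ)
          Filter.atTop (nhds ⟪w, e2p p i⟫_ℝ) :=
        Filter.Tendsto.inner hw tendsto_const_nhds
      have t2 : (fun n => ⟪ι (v n), e2p p i⟫_ℝ) = fun _ => (0:ℝ) := by
        funext n
        rw [hι, inner_iota]
        by_contra h
        have : i ∈ (v n).support := Finsupp.mem_support_iff.mpr h
        exact ((Finsupp.mem_supported ℝ (v n)).mp (hv_supp n) this).1 rfl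
      rw [t2] at t1
      exact tendsto_nhds_unique t1 tendsto_const_nhds
    rw [inner_sub_left, hwi, sub_zero]
  · -- j-coordinate
    have hwj : ⟪w, e2p p j⟫_ℝ = 0 := by
      have t1 : Filter.Tendsto (fun n => ⟪ι (v n), e2p p j⟫_ℝ)
          Filter.atTop (nhds ⟪w, e2p p j⟫_ℝ) :=
        Filter.Tendsto.inner hw tendsto_const_nhds
      have t2 : (fun n => ⟪ι (v n), e2p p j⟫_ℝ) = fun _ => (0:ℝ) := by
        funext n
        rw [hι, inner_iota]
        by_contra h
        have : j ∈ (v n).support := Finsupp.mem_support_iff.mpr h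
        exact ((Finsupp.mem_supported ℝ (v n)).mp (hv_supp n) this).2 rfl
      rw [t2] at t1
      exact tendsto_nhds_unique t1 tendsto_const_nhds
    rw [inner_sub_left, hwj, sub_zero]

lemma lp_ext_inner {p : ℕ} {f g : Ell2p p}
    (h : ∀ k : ℤ × Fin p, ⟪f, e2p p k⟫_ℝ = ⟪g, e2p p k⟫_ℝ) : f = g := by
  apply lp.ext
  funext k
  have := h k
  rwa [inner_e, inner_e] at this

end Statement3Aux

open Statement3Aux in
/-- **Lemma 2.2, covariance form.** The 2×2 Gram matrix of the two residuals
equals the inverse of the corresponding 2×2 submatrix of the inverse Gram operator. -/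
theorem statement_3
    {H : Type*} [NormedAddCommGroup H] [InnerProductSpace ℝ H] [CompleteSpace H]
    (p : ℕ) (hp : 1 ≤ p) (x : ℤ × Fin p → H)
    (lamInf lamSup : ℝ)
    (hInf : IsGLB (gramQuadSet x) lamInf)
    (hSup : IsLUB (gramQuadSet x) lamSup)
    (hpos : 0 < lamInf)
    (C : Ell2p p →L[ℝ] Ell2p p)
    (hC : ∀ i j : ℤ × Fin p, ⟪C (e2p p j), e2p p i⟫_ℝ = ⟪x i, x j⟫_ℝ)
    (hCsa : ∀ u v : Ell2p p, ⟪C u, v⟫_ℝ = ⟪u, C v⟫_ℝ)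
    (hlo : ∀ v : Ell2p p, lamInf * ‖v‖ ^ 2 ≤ ⟪C v, v⟫_ℝ)
    (hhi : ∀ v : Ell2p p, ⟪C v, v⟫_ℝ ≤ lamSup * ‖v‖ ^ 2)
    (D : Ell2p p →L[ℝ] Ell2p p)
    (hCD : C.comp D = ContinuousLinearMap.id ℝ (Ell2p p))
    (hDC : D.comp C = ContinuousLinearMap.id ℝ (Ell2p p))
    (i j : ℤ × Fin p) (hij : i ≠ j)
    (r₁ r₂ : H)
    (hr₁ : IsResidual (x '' {k : ℤ × Fin p | k ≠ i ∧ k ≠ j}) (x i) r₁)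
    (hr₂ : IsResidual (x '' {k : ℤ × Fin p | k ≠ i ∧ k ≠ j}) (x j) r₂) :
    !![⟪r₁, r₁⟫_ℝ, ⟪r₁, r₂⟫_ℝ; ⟪r₂, r₁⟫_ℝ, ⟪r₂, r₂⟫_ℝ] =
      (!![⟪D (e2p p i), e2p p i⟫_ℝ, ⟪D (e2p p j), e2p p i⟫_ℝ;
          ⟪D (e2p p i), e2p p j⟫_ℝ, ⟪D (e2p p j), e2p p j⟫_ℝ])⁻¹ := by
  set S : Set H := x '' {k : ℤ × Fin p | k ≠ i ∧ k ≠ j} with hS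
  -- orthogonality of residuals to the closure
  have hperp₁ := ortho_closure hr₁.2
  have hperp₂ := ortho_closure hr₂.2
  -- inner products of x i, x j with residuals
  have hxi1 : ⟪x i, r₁⟫_ℝ = ⟪r₁, r₁⟫_ℝ := by
    have h0 : ⟪x i - r₁, r₁⟫_ℝ = 0 := by
      rw [real_inner_comm]; exact hperp₁ _ hr₁.1
    rw [inner_sub_left] at h0; linarith
  have hxj1 : ⟪x j, r₁⟫_ℝ = ⟪r₂, r₁⟫_ℝ := by
    have h0 : ⟪x j - r₂, r₁⟫_ℝ = 0 := by
      rw [real_inner_comm]; exact hperp₁ _ hr₂.1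
    rw [inner_sub_left] at h0; linarith
  have hxi2 : ⟪x i, r₂⟫_ℝ = ⟪r₁, r₂⟫_ℝ := by
    have h0 : ⟪x i - r₁, r₂⟫_ℝ = 0 := by
      rw [real_inner_comm]; exact hperp₂ _ hr₁.1
    rw [inner_sub_left] at h0; linarith
  have hxj2 : ⟪x j, r₂⟫_ℝ = ⟪r₂, r₂⟫_ℝ := by
    have h0 : ⟪x j - r₂, r₂⟫_ℝ = 0 := by
      rw [real_inner_comm]; exact hperp₂ _ hr₂.1
    rw [inner_sub_left] at h0; linarith
  have hoff₁ : ∀ k : ℤ × Fin p, k ≠ i → k ≠ j → ⟪x k, r₁⟫_ℝ = 0 := by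
    intro k hki hkj
    rw [real_inner_comm]
    exact hr₁.2 _ ⟨k, ⟨hki, hkj⟩, rfl⟩
  have hoff₂ : ∀ k : ℤ × Fin p, k ≠ i → k ≠ j → ⟪x k, r₂⟫_ℝ = 0 := by
    intro k hki hkj
    rw [real_inner_comm]
    exact hr₂.2 _ ⟨k, ⟨hki, hkj⟩, rfl⟩
  -- abbreviations
  set a : ℝ := ⟪r₁, r₁⟫_ℝ
  set b : ℝ := ⟪r₁, r₂⟫_ℝ
  set c : ℝ := ⟪r₂, r₁⟫_ℝ
  set d : ℝ := ⟪r₂, r₂⟫_ℝ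
  set Dii : ℝ := ⟪D (e2p p i), e2p p i⟫_ℝ
  set Dji : ℝ := ⟪D (e2p p j), e2p p i⟫_ℝ
  set Dij : ℝ := ⟪D (e2p p i), e2p p j⟫_ℝ
  set Djj : ℝ := ⟪D (e2p p j), e2p p j⟫_ℝ
  -- basis inner products
  have heii : ⟪e2p p i, e2p p i⟫_ℝ = 1 := by rw [inner_ee, if_pos rfl]
  have hejj : ⟪e2p p j, e2p p j⟫_ℝ = 1 := by rw [inner_ee, if_pos rfl]
  have heij : ⟪e2p p i, e2p p j⟫_ℝ = 0 := by rw [inner_ee, if_neg (Ne.symm hij)]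
  have heji : ⟪e2p p j, e2p p i⟫_ℝ = 0 := by rw [inner_ee, if_neg hij]
  -- obtain u₁ and u₂
  obtain ⟨u₁, hu₁C, hu₁i, hu₁j⟩ := exists_u x lamInf hpos C hC hlo i j i r₁ hr₁
  obtain ⟨u₂, hu₂C, hu₂i, hu₂j⟩ := exists_u x lamInf hpos C hC hlo i j j r₂ hr₂
  -- identify C u₁ and C u₂
  have hCu₁ : C u₁ = a • e2p p i + c • e2p p j := by
    apply lp_ext_inner
    intro k
    rw [hu₁C k, inner_add_left, real_inner_smul_left, real_inner_smul_left]
    by_cases hki : k = i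
    · subst hki
      rw [hxi1, heii, heji]; ring
    · by_cases hkj : k = j
      · subst hkj
        rw [hxj1, heij, hejj]; ring
      · rw [hoff₁ k hki hkj, inner_ee, inner_ee, if_neg hki, if_neg hkj]; ring
  have hCu₂ : C u₂ = b • e2p p i + d • e2p p j := by
    apply lp_ext_inner
    intro k
    rw [hu₂C k, inner_add_left, real_inner_smul_left, real_inner_smul_left]
    by_cases hki : k = i
    · subst hki
      rw [hxi2, heii, heji]; ring
    · by_cases hkj : k = j
      · subst hkj
        rw [hxj2, heij, hejj]; ring
      · rw [hoff₂ k hki hkj, inner_ee, inner_ee, if_neg hki, if_neg hkj]; ring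
  -- recover u₁, u₂ via D
  have hDid : ∀ u : Ell2p p, D (C u) = u := fun u =>
    congrArg (fun T : Ell2p p →L[ℝ] Ell2p p => T u) hDC
  have hu₁ : u₁ = a • D (e2p p i) + c • D (e2p p j) := by
    rw [← hDid u₁, hCu₁, map_add, map_smul, map_smul]
  have hu₂ : u₂ = b • D (e2p p i) + d • D (e2p p j) := by
    rw [← hDid u₂, hCu₂, map_add, map_smul, map_smul]
  -- the four scalar identities
  have e1 : a * Dii + c * Dji = 1 := by
    have := hu₁i
    rw [hu₁, inner_add_left, real_inner_smul_left, real_inner_smul_left, heii] at this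
    linarith
  have e2 : a * Dij + c * Djj = 0 := by
    have := hu₁j
    rw [hu₁, inner_add_left, real_inner_smul_left, real_inner_smul_left, heij] at this
    linarith
  have e3 : b * Dii + d * Dji = 0 := by
    have := hu₂i
    rw [hu₂, inner_add_left, real_inner_smul_left, real_inner_smul_left, heji] at this
    linarith
  have e4 : b * Dij + d * Djj = 1 := by
    have := hu₂j
    rw [hu₂, inner_add_left, real_inner_smul_left, real_inner_smul_left, hejj] at this
    linarith
  -- finish via matrix inverse
  have hBA : !![Dii, Dji; Dij, Djj] * !![a, b; c, d] = 1 := by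
    have h11 : Dii * a + Dji * c = 1 := by linarith
    have h12 : Dii * b + Dji * d = 0 := by linarith
    have h21 : Dij * a + Djj * c = 0 := by linarith
    have h22 : Dij * b + Djj * d = 1 := by linarith
    rw [Matrix.mul_fin_two, h11, h12, h21, h22, Matrix.one_fin_two]
  exact (Matrix.inv_eq_right_inv hBA).symm
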